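/- Introducing a fresh proposition per subformula reduces CTL over an arbitrary Boolean base to temporal depth 2 with AG: for every CTL formula φ over a finite Boolean base C, the formula ψ := x_φ ∧ AG ξ — where ξ is the conjunction, over all subformulas α of φ, of the biconditionals x_α ↔ (the one-step definition of α in terms of the propositions x_β of its immediate subformulas, with Boolean functions expanded into DNF over {∧,∨,¬}) — is frame-equivalent to φ: a rooted serial frame carries a valuation satisfying φ iff it carries a valuation satisfying ψ. -/

import Mathlib

def Serial {W : Type} (R : W → W → Prop) : Prop := ∀ w, ∃ u, R w u
def IsPath {W : Type} (R : W → W → Prop) (π : ℕ → W) : Prop := ∀ i, R (π i) (π (i+1))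
structure Kripke (W : Type) where
  R : W → W → Prop
  V : ℕ → W → Prop

/-- CTL formulas over an arbitrary (finite) Boolean base: connectives are arbitrary
Boolean functions of fixed arity. -/
inductive GF where
  | atom : ℕ → GF
  | bf : {n : ℕ} → ((Fin n → Bool) → Bool) → (Fin n → GF) → GF
  | AX : GF → GF
  | EX : GF → GF
  | AF : GF → GF
  | EF : GF → GF
  | AG : GF → GF
  | EG : GF → GF
  | AU : GF → GF → GF
  | EU : GF → GF → GF
  | AR : GF → GF → GF
  | ER : GF → GF → GF

def gsat {W : Type} (K : Kripke W) : GF → W → Prop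
  | .atom p, w => K.V p w
  | .bf f args, w => ∃ b, f b = true ∧ ∀ i, (b i = true ↔ gsat K (args i) w)
  | .AX φ, w => ∀ π : ℕ → W, IsPath K.R π → π 0 = w → gsat K φ (π 1)
  | .EX φ, w => ∃ π : ℕ → W, IsPath K.R π ∧ π 0 = w ∧ gsat K φ (π 1)
  | .AF φ, w => ∀ π : ℕ → W, IsPath K.R π → π 0 = w → ∃ i, gsat K φ (π i)
  | .EF φ, w => ∃ π : ℕ → W, IsPath K.R π ∧ π 0 = w ∧ ∃ i, gsat K φ (π i)
  | .AG φ, w => ∀ π : ℕ → W, IsPath K.R π → π 0 = w → ∀ i, gsat K φ (π i)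
  | .EG φ, w => ∃ π : ℕ → W, IsPath K.R π ∧ π 0 = w ∧ ∀ i, gsat K φ (π i)
  | .AU φ ψ, w => ∀ π : ℕ → W, IsPath K.R π → π 0 = w →
      ∃ i, gsat K ψ (π i) ∧ ∀ j, j < i → gsat K φ (π j)
  | .EU φ ψ, w => ∃ π : ℕ → W, IsPath K.R π ∧ π 0 = w ∧
      ∃ i, gsat K ψ (π i) ∧ ∀ j, j < i → gsat K φ (π j)
  | .AR φ ψ, w => ∀ π : ℕ → W, IsPath K.R π → π 0 = w →
      ∀ i, gsat K ψ (π i) ∨ ∃ j, j < i ∧ gsat K φ (π j)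
  | .ER φ ψ, w => ∃ π : ℕ → W, IsPath K.R π ∧ π 0 = w ∧
      ∀ i, gsat K ψ (π i) ∨ ∃ j, j < i ∧ gsat K φ (π j)

/-- Temporal depth. -/
def GF.td : GF → ℕ
  | .atom _ => 0
  | .bf _ args => Finset.univ.sup (fun i => (args i).td)
  | .AX φ => φ.td + 1
  | .EX φ => φ.td + 1
  | .AF φ => φ.td + 1
  | .EF φ => φ.td + 1
  | .AG φ => φ.td + 1
  | .EG φ => φ.td + 1
  | .AU φ ψ => max φ.td ψ.td + 1
  | .EU φ ψ => max φ.td ψ.td + 1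
  | .AR φ ψ => max φ.td ψ.td + 1
  | .ER φ ψ => max φ.td ψ.td + 1

/-- A list enumerating the subformulas of a formula. -/
def SFlist : GF → List GF
  | .atom p => [.atom p]
  | .bf f args => .bf f args :: (List.ofFn (fun i => SFlist (args i))).flatten
  | .AX φ => .AX φ :: SFlist φ
  | .EX φ => .EX φ :: SFlist φ
  | .AF φ => .AF φ :: SFlist φ
  | .EF φ => .EF φ :: SFlist φ
  | .AG φ => .AG φ :: SFlist φ
  | .EG φ => .EG φ :: SFlist φ
  | .AU φ ψ => .AU φ ψ :: (SFlist φ ++ SFlist ψ)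
  | .EU φ ψ => .EU φ ψ :: (SFlist φ ++ SFlist ψ)
  | .AR φ ψ => .AR φ ψ :: (SFlist φ ++ SFlist ψ)
  | .ER φ ψ => .ER φ ψ :: (SFlist φ ++ SFlist ψ)

/-- Occurrence of an atomic proposition in a formula. -/
inductive AtomOccurs (p : ℕ) : GF → Prop
  | atom : AtomOccurs p (.atom p)
  | bf {n : ℕ} {f : (Fin n → Bool) → Bool} {args : Fin n → GF} (i : Fin n) :
      AtomOccurs p (args i) → AtomOccurs p (.bf f args)
  | ax {φ} : AtomOccurs p φ → AtomOccurs p (.AX φ)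
  | ex {φ} : AtomOccurs p φ → AtomOccurs p (.EX φ)
  | af {φ} : AtomOccurs p φ → AtomOccurs p (.AF φ)
  | ef {φ} : AtomOccurs p φ → AtomOccurs p (.EF φ)
  | ag {φ} : AtomOccurs p φ → AtomOccurs p (.AG φ)
  | eg {φ} : AtomOccurs p φ → AtomOccurs p (.EG φ)
  | auL {φ ψ} : AtomOccurs p φ → AtomOccurs p (.AU φ ψ)
  | auR {φ ψ} : AtomOccurs p ψ → AtomOccurs p (.AU φ ψ)
  | euL {φ ψ} : AtomOccurs p φ → AtomOccurs p (.EU φ ψ)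
  | euR {φ ψ} : AtomOccurs p ψ → AtomOccurs p (.EU φ ψ)
  | arL {φ ψ} : AtomOccurs p φ → AtomOccurs p (.AR φ ψ)
  | arR {φ ψ} : AtomOccurs p ψ → AtomOccurs p (.AR φ ψ)
  | erL {φ ψ} : AtomOccurs p φ → AtomOccurs p (.ER φ ψ)
  | erR {φ ψ} : AtomOccurs p ψ → AtomOccurs p (.ER φ ψ)

-- Standard connectives `{∧, ∨, ¬, ⊤, ⊥}`, expressed as Boolean-function connectives.
def gneg (a : GF) : GF := .bf (fun v => !(v 0)) ![a]
def gand (a b : GF) : GF := .bf (fun v => v 0 && v 1) ![a, b]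
def gor (a b : GF) : GF := .bf (fun v => v 0 || v 1) ![a, b]
def gtr : GF := .bf (n := 0) (fun _ => true) ![]
def gfls : GF := .bf (n := 0) (fun _ => false) ![]
def giff (a b : GF) : GF := gor (gand a b) (gand (gneg a) (gneg b))
def bigAnd (l : List GF) : GF := l.foldr gand gtr
def bigOr (l : List GF) : GF := l.foldr gor gfls

/-- The one-step definition of a subformula `α` in terms of the fresh propositions
`x_β` of its immediate subformulas; Boolean functions are expanded into DNF over
`{∧, ∨, ¬}`. -/
noncomputable def oneStep (x : GF → ℕ) : GF → GF
  | .atom p => .atom p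
  | .bf f args => bigOr (((Finset.univ.filter (fun b => f b = true)).toList).map
      (fun b => bigAnd (List.ofFn (fun i =>
        if b i then GF.atom (x (args i)) else gneg (.atom (x (args i)))))))
  | .AX φ => .AX (.atom (x φ))
  | .EX φ => .EX (.atom (x φ))
  | .AF φ => .AF (.atom (x φ))
  | .EF φ => .EF (.atom (x φ))
  | .AG φ => .AG (.atom (x φ))
  | .EG φ => .EG (.atom (x φ))
  | .AU φ ψ => .AU (.atom (x φ)) (.atom (x ψ))
  | .EU φ ψ => .EU (.atom (x φ)) (.atom (x ψ))
  | .AR φ ψ => .AR (.atom (x φ)) (.atom (x ψ))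
  | .ER φ ψ => .ER (.atom (x φ)) (.atom (x ψ))

/-- The conjunction `ξ` of the biconditionals `x_α ↔ (one-step definition of α)` over
all subformulas `α` of `φ`. -/
noncomputable def xiFormula (x : GF → ℕ) (φ : GF) : GF :=
  bigAnd ((SFlist φ).map (fun α => giff (.atom (x α)) (oneStep x α)))

/-- The reduced formula `ψ := x_φ ∧ AG ξ`, of temporal depth 2. -/
noncomputable def psiFormula (x : GF → ℕ) (φ : GF) : GF :=
  gand (.atom (x φ)) (.AG (xiFormula x φ))

section Aux

lemma listMemOfFn {α : Type*} {n : ℕ} {f : Fin n → α} {a : α} :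
    a ∈ List.ofFn f ↔ ∃ i, f i = a := by
  rw [List.mem_ofFn]


open Classical in
/-- Characterization of `gsat` on Boolean-function formulas via the canonical vector. -/
lemma gsat_bf {W : Type} (K : Kripke W) {n : ℕ} (f : (Fin n → Bool) → Bool)
    (args : Fin n → GF) (w : W) :
    gsat K (.bf f args) w ↔ f (fun i => decide (gsat K (args i) w)) = true := by
  constructor
  · rintro ⟨b, hfb, hb⟩
    have : (fun i => decide (gsat K (args i) w)) = b := by
      funext i
      rw [Bool.eq_iff_iff, decide_eq_true_iff]
      exact (hb i).symm
    rwa [this]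
  · intro h
    exact ⟨_, h, fun i => by simp⟩

lemma gsat_gtr {W : Type} (K : Kripke W) (w : W) : gsat K gtr w := by
  rw [gtr, gsat_bf]

lemma gsat_gfls {W : Type} (K : Kripke W) (w : W) : ¬ gsat K gfls w := by
  rw [gfls, gsat_bf]; simp

lemma gsat_gneg {W : Type} (K : Kripke W) (a : GF) (w : W) :
    gsat K (gneg a) w ↔ ¬ gsat K a w := by
  rw [gneg, gsat_bf]; simp; exact decide_eq_false_iff_not

lemma gsat_gand {W : Type} (K : Kripke W) (a b : GF) (w : W) :
    gsat K (gand a b) w ↔ gsat K a w ∧ gsat K b w := by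
  rw [gand, gsat_bf]; simp; exact and_congr (@decide_eq_true_iff _ (Classical.propDecidable _))
      (@decide_eq_true_iff _ (Classical.propDecidable _))

lemma gsat_gor {W : Type} (K : Kripke W) (a b : GF) (w : W) :
    gsat K (gor a b) w ↔ gsat K a w ∨ gsat K b w := by
  rw [gor, gsat_bf]; simp; exact or_congr (@decide_eq_true_iff _ (Classical.propDecidable _))
      (@decide_eq_true_iff _ (Classical.propDecidable _))

lemma gsat_giff {W : Type} (K : Kripke W) (a b : GF) (w : W) :
    gsat K (giff a b) w ↔ (gsat K a w ↔ gsat K b w) := by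
  rw [giff, gsat_gor, gsat_gand, gsat_gand, gsat_gneg, gsat_gneg]; tauto

lemma gsat_bigAnd {W : Type} (K : Kripke W) (l : List GF) (w : W) :
    gsat K (bigAnd l) w ↔ ∀ a ∈ l, gsat K a w := by
  induction l with
  | nil => simp [bigAnd, gsat_gtr]
  | cons a l ih =>
      rw [show bigAnd (a::l) = gand a (bigAnd l) from rfl, gsat_gand, ih]
      simp

lemma gsat_bigOr {W : Type} (K : Kripke W) (l : List GF) (w : W) :
    gsat K (bigOr l) w ↔ ∃ a ∈ l, gsat K a w := by
  induction l with
  | nil => simp [bigOr, gsat_gfls]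
  | cons a l ih =>
      rw [show bigOr (a::l) = gor a (bigOr l) from rfl, gsat_gor, ih]
      simp

/-! ### Temporal depth bounds -/

lemma td_gand_le {a b : GF} {m : ℕ} (h1 : a.td ≤ m) (h2 : b.td ≤ m) :
    (gand a b).td ≤ m := by
  simp only [gand, GF.td]
  apply Finset.sup_le
  intro i _
  fin_cases i <;> simpa

lemma td_gor_le {a b : GF} {m : ℕ} (h1 : a.td ≤ m) (h2 : b.td ≤ m) :
    (gor a b).td ≤ m := by
  simp only [gor, GF.td]
  apply Finset.sup_le
  intro i _
  fin_cases i <;> simpa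

lemma td_gneg_le {a : GF} {m : ℕ} (h1 : a.td ≤ m) : (gneg a).td ≤ m := by
  simp only [gneg, GF.td]
  apply Finset.sup_le
  intro i _
  fin_cases i <;> simpa

lemma td_gtr_le {m : ℕ} : gtr.td ≤ m := by
  simp only [gtr, GF.td]
  apply Finset.sup_le
  intro i _
  exact i.elim0

lemma td_gfls_le {m : ℕ} : gfls.td ≤ m := by
  simp only [gfls, GF.td]
  apply Finset.sup_le
  intro i _
  exact i.elim0

lemma td_giff_le {a b : GF} {m : ℕ} (h1 : a.td ≤ m) (h2 : b.td ≤ m) :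
    (giff a b).td ≤ m := by
  exact td_gor_le (td_gand_le h1 h2) (td_gand_le (td_gneg_le h1) (td_gneg_le h2))

lemma td_bigAnd_le {l : List GF} {m : ℕ} (h : ∀ a ∈ l, a.td ≤ m) :
    (bigAnd l).td ≤ m := by
  induction l with
  | nil => exact td_gtr_le
  | cons a l ih =>
      exact td_gand_le (h a (by simp)) (ih fun b hb => h b (by simp [hb]))

lemma td_bigOr_le {l : List GF} {m : ℕ} (h : ∀ a ∈ l, a.td ≤ m) :
    (bigOr l).td ≤ m := by
  induction l with
  | nil => exact td_gfls_le
  | cons a l ih =>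
      exact td_gor_le (h a (by simp)) (ih fun b hb => h b (by simp [hb]))

lemma td_oneStep_le (x : GF → ℕ) (α : GF) : (oneStep x α).td ≤ 1 := by
  cases α with
  | atom p => simp [oneStep, GF.td]
  | bf f args =>
      apply td_bigOr_le
      intro a ha
      obtain ⟨b, _, rfl⟩ := List.mem_map.mp ha
      apply td_bigAnd_le
      intro c hc
      obtain ⟨i, rfl⟩ := listMemOfFn.mp hc
      split
      · simp [GF.td]
      · exact td_gneg_le (by simp [GF.td])
  | _ => simp [oneStep, GF.td]

/-! ### Subformula list lemmas -/

lemma self_mem_SFlist (φ : GF) : φ ∈ SFlist φ := by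
  cases φ <;> simp [SFlist]

lemma SFlist_trans {φ α β : GF} (h1 : α ∈ SFlist φ) (h2 : β ∈ SFlist α) :
    β ∈ SFlist φ := by
  induction φ with
  | atom p =>
      simp only [SFlist, List.mem_singleton] at h1
      subst h1; exact h2
  | bf f args ih =>
      simp only [SFlist, List.mem_cons, List.mem_flatten] at h1 ⊢
      rcases h1 with rfl | ⟨l, hl, hα⟩
      · simp only [SFlist, List.mem_cons, List.mem_flatten] at h2
        exact h2
      · obtain ⟨i, rfl⟩ := listMemOfFn.mp hl
        exact Or.inr ⟨_, hl, ih i hα⟩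
  | AX γ ih =>
      simp only [SFlist, List.mem_cons] at h1 ⊢
      rcases h1 with rfl | hα
      · simpa [SFlist] using h2
      · exact Or.inr (ih hα)
  | EX γ ih =>
      simp only [SFlist, List.mem_cons] at h1 ⊢
      rcases h1 with rfl | hα
      · simpa [SFlist] using h2
      · exact Or.inr (ih hα)
  | AF γ ih =>
      simp only [SFlist, List.mem_cons] at h1 ⊢
      rcases h1 with rfl | hα
      · simpa [SFlist] using h2
      · exact Or.inr (ih hα)
  | EF γ ih =>
      simp only [SFlist, List.mem_cons] at h1 ⊢
      rcases h1 with rfl | hα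
      · simpa [SFlist] using h2
      · exact Or.inr (ih hα)
  | AG γ ih =>
      simp only [SFlist, List.mem_cons] at h1 ⊢
      rcases h1 with rfl | hα
      · simpa [SFlist] using h2
      · exact Or.inr (ih hα)
  | EG γ ih =>
      simp only [SFlist, List.mem_cons] at h1 ⊢
      rcases h1 with rfl | hα
      · simpa [SFlist] using h2
      · exact Or.inr (ih hα)
  | AU γ δ ih1 ih2 =>
      simp only [SFlist, List.mem_cons, List.mem_append] at h1 ⊢
      rcases h1 with rfl | hα | hα
      · simpa [SFlist] using h2
      · exact Or.inr (Or.inl (ih1 hα))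
      · exact Or.inr (Or.inr (ih2 hα))
  | EU γ δ ih1 ih2 =>
      simp only [SFlist, List.mem_cons, List.mem_append] at h1 ⊢
      rcases h1 with rfl | hα | hα
      · simpa [SFlist] using h2
      · exact Or.inr (Or.inl (ih1 hα))
      · exact Or.inr (Or.inr (ih2 hα))
  | AR γ δ ih1 ih2 =>
      simp only [SFlist, List.mem_cons, List.mem_append] at h1 ⊢
      rcases h1 with rfl | hα | hα
      · simpa [SFlist] using h2
      · exact Or.inr (Or.inl (ih1 hα))
      · exact Or.inr (Or.inr (ih2 hα))
  | ER γ δ ih1 ih2 =>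
      simp only [SFlist, List.mem_cons, List.mem_append] at h1 ⊢
      rcases h1 with rfl | hα | hα
      · simpa [SFlist] using h2
      · exact Or.inr (Or.inl (ih1 hα))
      · exact Or.inr (Or.inr (ih2 hα))

lemma atomOccurs_of_mem_SFlist {φ α : GF} {p : ℕ} (h1 : α ∈ SFlist φ)
    (h2 : AtomOccurs p α) : AtomOccurs p φ := by
  induction φ with
  | atom q =>
      simp only [SFlist, List.mem_singleton] at h1
      subst h1; exact h2
  | bf f args ih =>
      simp only [SFlist, List.mem_cons, List.mem_flatten] at h1
      rcases h1 with rfl | ⟨l, hl, hα⟩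
      · exact h2
      · obtain ⟨i, rfl⟩ := listMemOfFn.mp hl
        exact AtomOccurs.bf i (ih i hα)
  | AX γ ih =>
      simp only [SFlist, List.mem_cons] at h1
      rcases h1 with rfl | hα
      · exact h2
      · exact AtomOccurs.ax (ih hα)
  | EX γ ih =>
      simp only [SFlist, List.mem_cons] at h1
      rcases h1 with rfl | hα
      · exact h2
      · exact AtomOccurs.ex (ih hα)
  | AF γ ih =>
      simp only [SFlist, List.mem_cons] at h1
      rcases h1 with rfl | hα
      · exact h2
      · exact AtomOccurs.af (ih hα)
  | EF γ ih =>
      simp only [SFlist, List.mem_cons] at h1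
      rcases h1 with rfl | hα
      · exact h2
      · exact AtomOccurs.ef (ih hα)
  | AG γ ih =>
      simp only [SFlist, List.mem_cons] at h1
      rcases h1 with rfl | hα
      · exact h2
      · exact AtomOccurs.ag (ih hα)
  | EG γ ih =>
      simp only [SFlist, List.mem_cons] at h1
      rcases h1 with rfl | hα
      · exact h2
      · exact AtomOccurs.eg (ih hα)
  | AU γ δ ih1 ih2 =>
      simp only [SFlist, List.mem_cons, List.mem_append] at h1
      rcases h1 with rfl | hα | hα
      · exact h2
      · exact AtomOccurs.auL (ih1 hα)
      · exact AtomOccurs.auR (ih2 hα)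
  | EU γ δ ih1 ih2 =>
      simp only [SFlist, List.mem_cons, List.mem_append] at h1
      rcases h1 with rfl | hα | hα
      · exact h2
      · exact AtomOccurs.euL (ih1 hα)
      · exact AtomOccurs.euR (ih2 hα)
  | AR γ δ ih1 ih2 =>
      simp only [SFlist, List.mem_cons, List.mem_append] at h1
      rcases h1 with rfl | hα | hα
      · exact h2
      · exact AtomOccurs.arL (ih1 hα)
      · exact AtomOccurs.arR (ih2 hα)
  | ER γ δ ih1 ih2 =>
      simp only [SFlist, List.mem_cons, List.mem_append] at h1
      rcases h1 with rfl | hα | hα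
      · exact h2
      · exact AtomOccurs.erL (ih1 hα)
      · exact AtomOccurs.erR (ih2 hα)

/-! ### Paths and reachability -/

lemma exists_path {W : Type} {R : W → W → Prop} (hR : Serial R) (w : W) :
    ∃ π : ℕ → W, IsPath R π ∧ π 0 = w := by
  choose f hf using hR
  refine ⟨fun n => f^[n] w, fun i => ?_, rfl⟩
  show R (f^[i] w) (f^[i+1] w)
  rw [Function.iterate_succ_apply']
  exact hf _

def Reach {W : Type} (R : W → W → Prop) (w u : W) : Prop :=
  ∃ (π : ℕ → W) (n : ℕ), IsPath R π ∧ π 0 = w ∧ π n = u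

lemma reach_self {W : Type} {R : W → W → Prop} (hR : Serial R) (w : W) :
    Reach R w w := by
  obtain ⟨π, h1, h2⟩ := exists_path hR w
  exact ⟨π, 0, h1, h2, h2⟩

lemma reach_path {W : Type} {R : W → W → Prop} {w u : W} {π : ℕ → W}
    (h : Reach R w u) (hπ : IsPath R π) (h0 : π 0 = u) (i : ℕ) :
    Reach R w (π i) := by
  obtain ⟨σ, n, hσ, hσ0, hσn⟩ := h
  refine ⟨fun k => if k < n then σ k else π (k - n), n + i, fun k => ?_, ?_, ?_⟩
  · by_cases h1 : k + 1 < n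
    · simp only [if_pos (by omega : k < n), if_pos h1]
      exact hσ k
    · by_cases h2 : k < n
      · have hkn : k + 1 = n := by omega
        simp only [if_pos h2, if_neg h1]
        have : π (k + 1 - n) = σ n := by rw [hkn]; simp [h0, hσn]
        rw [this, ← hkn]
        exact hσ k
      · simp only [if_neg h2, if_neg h1]
        have : k + 1 - n = (k - n) + 1 := by omega
        rw [this]
        exact hπ _
  · by_cases h2 : 0 < n
    · simp [if_pos h2, hσ0]
    · have hn0 : n = 0 := by omega
      subst hn0
      simp only [Nat.lt_irrefl, if_false]
      rw [show (0:ℕ) - 0 = 0 from rfl, h0, ← hσn, hσ0]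
  · simp only [if_neg (by omega : ¬ n + i < n)]
    congr 1
    omega

/-! ### Congruence lemmas for temporal operators -/

section Congr

variable {W : Type} {R : W → W → Prop} {V1 V2 : ℕ → W → Prop} {S : W → Prop}
  {β β' γ γ' : GF} {u : W}

lemma congr_AX (hS : ∀ π : ℕ → W, IsPath R π → S (π 0) → ∀ i, S (π i))
    (hβ : ∀ v, S v → (gsat ⟨R, V1⟩ β v ↔ gsat ⟨R, V2⟩ β' v)) (hu : S u) :
    gsat ⟨R, V1⟩ (.AX β) u ↔ gsat ⟨R, V2⟩ (.AX β') u := by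
  simp only [gsat]
  constructor <;> intro h π hπ h0
  · exact (hβ _ (hS π hπ (h0 ▸ hu) 1)).mp (h π hπ h0)
  · exact (hβ _ (hS π hπ (h0 ▸ hu) 1)).mpr (h π hπ h0)

lemma congr_EX (hS : ∀ π : ℕ → W, IsPath R π → S (π 0) → ∀ i, S (π i))
    (hβ : ∀ v, S v → (gsat ⟨R, V1⟩ β v ↔ gsat ⟨R, V2⟩ β' v)) (hu : S u) :
    gsat ⟨R, V1⟩ (.EX β) u ↔ gsat ⟨R, V2⟩ (.EX β') u := by
  simp only [gsat]
  constructor <;> rintro ⟨π, hπ, h0, h⟩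
  · exact ⟨π, hπ, h0, (hβ _ (hS π hπ (h0 ▸ hu) 1)).mp h⟩
  · exact ⟨π, hπ, h0, (hβ _ (hS π hπ (h0 ▸ hu) 1)).mpr h⟩

lemma congr_AF (hS : ∀ π : ℕ → W, IsPath R π → S (π 0) → ∀ i, S (π i))
    (hβ : ∀ v, S v → (gsat ⟨R, V1⟩ β v ↔ gsat ⟨R, V2⟩ β' v)) (hu : S u) :
    gsat ⟨R, V1⟩ (.AF β) u ↔ gsat ⟨R, V2⟩ (.AF β') u := by
  simp only [gsat]
  constructor <;> intro h π hπ h0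
  · obtain ⟨i, hi⟩ := h π hπ h0
    exact ⟨i, (hβ _ (hS π hπ (h0 ▸ hu) i)).mp hi⟩
  · obtain ⟨i, hi⟩ := h π hπ h0
    exact ⟨i, (hβ _ (hS π hπ (h0 ▸ hu) i)).mpr hi⟩

lemma congr_EF (hS : ∀ π : ℕ → W, IsPath R π → S (π 0) → ∀ i, S (π i))
    (hβ : ∀ v, S v → (gsat ⟨R, V1⟩ β v ↔ gsat ⟨R, V2⟩ β' v)) (hu : S u) :
    gsat ⟨R, V1⟩ (.EF β) u ↔ gsat ⟨R, V2⟩ (.EF β') u := by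
  simp only [gsat]
  constructor <;> rintro ⟨π, hπ, h0, i, hi⟩
  · exact ⟨π, hπ, h0, i, (hβ _ (hS π hπ (h0 ▸ hu) i)).mp hi⟩
  · exact ⟨π, hπ, h0, i, (hβ _ (hS π hπ (h0 ▸ hu) i)).mpr hi⟩

lemma congr_AG (hS : ∀ π : ℕ → W, IsPath R π → S (π 0) → ∀ i, S (π i))
    (hβ : ∀ v, S v → (gsat ⟨R, V1⟩ β v ↔ gsat ⟨R, V2⟩ β' v)) (hu : S u) :
    gsat ⟨R, V1⟩ (.AG β) u ↔ gsat ⟨R, V2⟩ (.AG β') u := by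
  simp only [gsat]
  constructor <;> intro h π hπ h0 i
  · exact (hβ _ (hS π hπ (h0 ▸ hu) i)).mp (h π hπ h0 i)
  · exact (hβ _ (hS π hπ (h0 ▸ hu) i)).mpr (h π hπ h0 i)

lemma congr_EG (hS : ∀ π : ℕ → W, IsPath R π → S (π 0) → ∀ i, S (π i))
    (hβ : ∀ v, S v → (gsat ⟨R, V1⟩ β v ↔ gsat ⟨R, V2⟩ β' v)) (hu : S u) :
    gsat ⟨R, V1⟩ (.EG β) u ↔ gsat ⟨R, V2⟩ (.EG β') u := by
  simp only [gsat]
  constructor <;> rintro ⟨π, hπ, h0, h⟩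
  · exact ⟨π, hπ, h0, fun i => (hβ _ (hS π hπ (h0 ▸ hu) i)).mp (h i)⟩
  · exact ⟨π, hπ, h0, fun i => (hβ _ (hS π hπ (h0 ▸ hu) i)).mpr (h i)⟩

lemma congr_AU (hS : ∀ π : ℕ → W, IsPath R π → S (π 0) → ∀ i, S (π i))
    (hβ : ∀ v, S v → (gsat ⟨R, V1⟩ β v ↔ gsat ⟨R, V2⟩ β' v))
    (hγ : ∀ v, S v → (gsat ⟨R, V1⟩ γ v ↔ gsat ⟨R, V2⟩ γ' v)) (hu : S u) :
    gsat ⟨R, V1⟩ (.AU β γ) u ↔ gsat ⟨R, V2⟩ (.AU β' γ') u := by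
  simp only [gsat]
  constructor <;> intro h π hπ h0
  · obtain ⟨i, hi, hj⟩ := h π hπ h0
    exact ⟨i, (hγ _ (hS π hπ (h0 ▸ hu) i)).mp hi,
      fun j hji => (hβ _ (hS π hπ (h0 ▸ hu) j)).mp (hj j hji)⟩
  · obtain ⟨i, hi, hj⟩ := h π hπ h0
    exact ⟨i, (hγ _ (hS π hπ (h0 ▸ hu) i)).mpr hi,
      fun j hji => (hβ _ (hS π hπ (h0 ▸ hu) j)).mpr (hj j hji)⟩

lemma congr_EU (hS : ∀ π : ℕ → W, IsPath R π → S (π 0) → ∀ i, S (π i))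
    (hβ : ∀ v, S v → (gsat ⟨R, V1⟩ β v ↔ gsat ⟨R, V2⟩ β' v))
    (hγ : ∀ v, S v → (gsat ⟨R, V1⟩ γ v ↔ gsat ⟨R, V2⟩ γ' v)) (hu : S u) :
    gsat ⟨R, V1⟩ (.EU β γ) u ↔ gsat ⟨R, V2⟩ (.EU β' γ') u := by
  simp only [gsat]
  constructor <;> rintro ⟨π, hπ, h0, i, hi, hj⟩
  · exact ⟨π, hπ, h0, i, (hγ _ (hS π hπ (h0 ▸ hu) i)).mp hi,
      fun j hji => (hβ _ (hS π hπ (h0 ▸ hu) j)).mp (hj j hji)⟩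
  · exact ⟨π, hπ, h0, i, (hγ _ (hS π hπ (h0 ▸ hu) i)).mpr hi,
      fun j hji => (hβ _ (hS π hπ (h0 ▸ hu) j)).mpr (hj j hji)⟩

lemma congr_AR (hS : ∀ π : ℕ → W, IsPath R π → S (π 0) → ∀ i, S (π i))
    (hβ : ∀ v, S v → (gsat ⟨R, V1⟩ β v ↔ gsat ⟨R, V2⟩ β' v))
    (hγ : ∀ v, S v → (gsat ⟨R, V1⟩ γ v ↔ gsat ⟨R, V2⟩ γ' v)) (hu : S u) :
    gsat ⟨R, V1⟩ (.AR β γ) u ↔ gsat ⟨R, V2⟩ (.AR β' γ') u := by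
  simp only [gsat]
  constructor <;> intro h π hπ h0 i
  · rcases h π hπ h0 i with hi | ⟨j, hji, hj⟩
    · exact Or.inl ((hγ _ (hS π hπ (h0 ▸ hu) i)).mp hi)
    · exact Or.inr ⟨j, hji, (hβ _ (hS π hπ (h0 ▸ hu) j)).mp hj⟩
  · rcases h π hπ h0 i with hi | ⟨j, hji, hj⟩
    · exact Or.inl ((hγ _ (hS π hπ (h0 ▸ hu) i)).mpr hi)
    · exact Or.inr ⟨j, hji, (hβ _ (hS π hπ (h0 ▸ hu) j)).mpr hj⟩

lemma congr_ER (hS : ∀ π : ℕ → W, IsPath R π → S (π 0) → ∀ i, S (π i))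
    (hβ : ∀ v, S v → (gsat ⟨R, V1⟩ β v ↔ gsat ⟨R, V2⟩ β' v))
    (hγ : ∀ v, S v → (gsat ⟨R, V1⟩ γ v ↔ gsat ⟨R, V2⟩ γ' v)) (hu : S u) :
    gsat ⟨R, V1⟩ (.ER β γ) u ↔ gsat ⟨R, V2⟩ (.ER β' γ') u := by
  simp only [gsat]
  constructor <;> rintro ⟨π, hπ, h0, h⟩
  · refine ⟨π, hπ, h0, fun i => ?_⟩
    rcases h i with hi | ⟨j, hji, hj⟩
    · exact Or.inl ((hγ _ (hS π hπ (h0 ▸ hu) i)).mp hi)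
    · exact Or.inr ⟨j, hji, (hβ _ (hS π hπ (h0 ▸ hu) j)).mp hj⟩
  · refine ⟨π, hπ, h0, fun i => ?_⟩
    rcases h i with hi | ⟨j, hji, hj⟩
    · exact Or.inl ((hγ _ (hS π hπ (h0 ▸ hu) i)).mpr hi)
    · exact Or.inr ⟨j, hji, (hβ _ (hS π hπ (h0 ▸ hu) j)).mpr hj⟩

end Congr

/-- Semantics of the DNF expansion of a Boolean-function subformula. -/
lemma gsat_oneStep_bf {W : Type} (K : Kripke W) (x : GF → ℕ) {n : ℕ}
    (f : (Fin n → Bool) → Bool) (args : Fin n → GF) (u : W) :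
    gsat K (oneStep x (.bf f args)) u ↔
      ∃ b : Fin n → Bool, f b = true ∧ ∀ i, (b i = true ↔ K.V (x (args i)) u) := by
  rw [oneStep, gsat_bigOr]
  constructor
  · rintro ⟨a, ha, hsat⟩
    simp only [List.mem_map, Finset.mem_toList, Finset.mem_filter, Finset.mem_univ,
      true_and] at ha
    obtain ⟨b, hfb, rfl⟩ := ha
    refine ⟨b, hfb, fun i => ?_⟩
    rw [gsat_bigAnd] at hsat
    have hi := hsat _ (listMemOfFn.mpr ⟨i, rfl⟩)
    by_cases hb : b i = true
    · rw [if_pos hb] at hi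
      simpa [hb, gsat] using hi
    · rw [if_neg hb] at hi
      rw [gsat_gneg] at hi
      simp only [gsat] at hi
      exact iff_of_false hb hi
  · rintro ⟨b, hfb, hb⟩
    refine ⟨_, List.mem_map.mpr ⟨b, by simp [hfb], rfl⟩, ?_⟩
    rw [gsat_bigAnd]
    intro a ha
    obtain ⟨i, rfl⟩ := listMemOfFn.mp ha
    by_cases hbi : b i = true
    · rw [if_pos hbi]
      simpa [gsat] using (hb i).mp hbi
    · rw [if_neg hbi]
      rw [gsat_gneg]
      simp only [gsat]
      intro hV
      exact hbi ((hb i).mpr hV)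

end Aux

/-- Introducing a fresh proposition `x_α` per subformula `α` reduces CTL over an
arbitrary Boolean base to temporal depth 2 with `AG`: `ψ := x_φ ∧ AG ξ` has temporal
depth at most 2 and is frame-equivalent to `φ` — a rooted serial frame carries a
valuation satisfying `φ` iff it carries a valuation satisfying `ψ`. -/
theorem depth_two_AG_reduction (φ : GF) (x : GF → ℕ)
    (hinj : Function.Injective x)
    (hfresh : ∀ p : ℕ, AtomOccurs p φ → ∀ α : GF, x α ≠ p) :
    (psiFormula x φ).td ≤ 2 ∧
    ∀ (W : Type) (R : W → W → Prop) (w : W), Serial R →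
      ((∃ V : ℕ → W → Prop, gsat ⟨R, V⟩ φ w) ↔
       (∃ V : ℕ → W → Prop, gsat ⟨R, V⟩ (psiFormula x φ) w)) := by
  classical
  constructor
  · -- temporal depth bound
    rw [psiFormula]
    apply td_gand_le
    · simp [GF.td]
    · have h1 : (xiFormula x φ).td ≤ 1 := by
        apply td_bigAnd_le
        intro a ha
        obtain ⟨α, _, rfl⟩ := List.mem_map.mp ha
        exact td_giff_le (by simp [GF.td]) (td_oneStep_le x α)
      show (xiFormula x φ).td + 1 ≤ 2
      omega
  · intro W R w hser
    constructor
    · -- φ satisfiable → ψ satisfiable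
      rintro ⟨V, hV⟩
      set V' : ℕ → W → Prop := fun p v =>
        if h : ∃ β, x β = p then gsat ⟨R, V⟩ h.choose v else V p v with hV'def
      have hx : ∀ β v, V' (x β) v ↔ gsat ⟨R, V⟩ β v := by
        intro β v
        have he : ∃ γ, x γ = x β := ⟨β, rfl⟩
        have hc : he.choose = β := hinj he.choose_spec
        simp only [hV'def, dif_pos he, hc]
      have hatoms : ∀ p v, AtomOccurs p φ → (V' p v ↔ V p v) := by
        intro p v hp
        have hne : ¬ ∃ β, x β = p := by rintro ⟨β, rfl⟩; exact hfresh _ hp β rfl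
        simp only [hV'def, dif_neg hne]
      have hS : ∀ π : ℕ → W, IsPath R π → (π 0 = π 0) → ∀ i, (π i = π i) :=
        fun _ _ _ _ => rfl
      have hones : ∀ α ∈ SFlist φ, ∀ v,
          gsat ⟨R, V'⟩ (oneStep x α) v ↔ gsat ⟨R, V⟩ α v := by
        intro α hα v
        have hSt : ∀ π : ℕ → W, IsPath R π → (fun _ : W => True) (π 0) →
            ∀ i, (fun _ : W => True) (π i) := fun _ _ _ _ => trivial
        have hatm : ∀ β, ∀ v' : W, (fun _ : W => True) v' →
            (gsat ⟨R, V'⟩ (.atom (x β)) v' ↔ gsat ⟨R, V⟩ β v') := by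
          intro β v' _
          simp only [gsat]
          exact hx β v'
        cases α with
        | atom p =>
            show gsat ⟨R, V'⟩ (.atom p) v ↔ gsat ⟨R, V⟩ (.atom p) v
            simp only [gsat]
            exact hatoms p v (atomOccurs_of_mem_SFlist hα AtomOccurs.atom)
        | bf f args =>
            rw [gsat_oneStep_bf]
            simp only [gsat]
            exact exists_congr fun b => and_congr_right fun _ =>
              forall_congr' fun i => iff_congr Iff.rfl (hx (args i) v)
        | AX β =>
            simp only [oneStep]
            exact congr_AX hSt (hatm β) trivial
        | EX β =>
            simp only [oneStep]
            exact congr_EX hSt (hatm β) trivial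
        | AF β =>
            simp only [oneStep]
            exact congr_AF hSt (hatm β) trivial
        | EF β =>
            simp only [oneStep]
            exact congr_EF hSt (hatm β) trivial
        | AG β =>
            simp only [oneStep]
            exact congr_AG hSt (hatm β) trivial
        | EG β =>
            simp only [oneStep]
            exact congr_EG hSt (hatm β) trivial
        | AU β γ =>
            simp only [oneStep]
            exact congr_AU hSt (hatm β) (hatm γ) trivial
        | EU β γ =>
            simp only [oneStep]
            exact congr_EU hSt (hatm β) (hatm γ) trivial
        | AR β γ =>
            simp only [oneStep]
            exact congr_AR hSt (hatm β) (hatm γ) trivial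
        | ER β γ =>
            simp only [oneStep]
            exact congr_ER hSt (hatm β) (hatm γ) trivial
      refine ⟨V', ?_⟩
      rw [psiFormula, gsat_gand]
      constructor
      · show gsat ⟨R, V'⟩ (.atom (x φ)) w
        simp only [gsat]
        exact (hx φ w).mpr hV
      · show gsat ⟨R, V'⟩ (.AG (xiFormula x φ)) w
        simp only [gsat]
        intro π hπ h0 i
        rw [xiFormula, gsat_bigAnd]
        intro a ha
        obtain ⟨α, hα, rfl⟩ := List.mem_map.mp ha
        rw [gsat_giff, hones α hα (π i)]
        simp only [gsat]
        exact hx α (π i)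
    · -- ψ satisfiable → φ satisfiable
      rintro ⟨V', hV'⟩
      rw [psiFormula, gsat_gand] at hV'
      obtain ⟨h1, h2⟩ := hV'
      simp only [gsat] at h2
      have hxi : ∀ u, Reach R w u → ∀ α ∈ SFlist φ,
          (gsat ⟨R, V'⟩ (.atom (x α)) u ↔ gsat ⟨R, V'⟩ (oneStep x α) u) := by
        intro u hu α hα
        obtain ⟨π, n, hπ, hπ0, hπn⟩ := hu
        have hξ := h2 π hπ hπ0 n
        rw [xiFormula, gsat_bigAnd] at hξ
        have hg := hξ _ (List.mem_map.mpr ⟨α, hα, rfl⟩)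
        rw [gsat_giff] at hg
        rwa [hπn] at hg
      have hS : ∀ π : ℕ → W, IsPath R π → Reach R w (π 0) → ∀ i, Reach R w (π i) :=
        fun π hπ h0 i => reach_path h0 hπ rfl i
      have main : ∀ α, α ∈ SFlist φ → ∀ u, Reach R w u →
          (gsat ⟨R, V'⟩ (.atom (x α)) u ↔ gsat ⟨R, V'⟩ α u) := by
        intro α
        induction α with
        | atom p =>
            intro hα u hu
            rw [hxi u hu _ hα]
            simp only [oneStep]
        | bf f args ih =>
            intro hα u hu
            rw [hxi u hu _ hα, gsat_oneStep_bf]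
            simp only [gsat]
            refine exists_congr fun b => and_congr_right fun _ =>
              forall_congr' fun i => iff_congr Iff.rfl ?_
            have hmem : args i ∈ SFlist φ := SFlist_trans hα (by
              simp only [SFlist, List.mem_cons]
              exact Or.inr (List.mem_flatten.mpr
                ⟨_, listMemOfFn.mpr ⟨i, rfl⟩, self_mem_SFlist _⟩))
            have h := ih i hmem u hu
            simp only [gsat] at h
            exact h
        | AX β ih =>
            intro hα u hu
            rw [hxi u hu _ hα]
            simp only [oneStep]
            exact congr_AX hS (ih (SFlist_trans hα (by simp [SFlist, self_mem_SFlist]))) hu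
        | EX β ih =>
            intro hα u hu
            rw [hxi u hu _ hα]
            simp only [oneStep]
            exact congr_EX hS (ih (SFlist_trans hα (by simp [SFlist, self_mem_SFlist]))) hu
        | AF β ih =>
            intro hα u hu
            rw [hxi u hu _ hα]
            simp only [oneStep]
            exact congr_AF hS (ih (SFlist_trans hα (by simp [SFlist, self_mem_SFlist]))) hu
        | EF β ih =>
            intro hα u hu
            rw [hxi u hu _ hα]
            simp only [oneStep]
            exact congr_EF hS (ih (SFlist_trans hα (by simp [SFlist, self_mem_SFlist]))) hu
        | AG β ih =>
            intro hα u hu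
            rw [hxi u hu _ hα]
            simp only [oneStep]
            exact congr_AG hS (ih (SFlist_trans hα (by simp [SFlist, self_mem_SFlist]))) hu
        | EG β ih =>
            intro hα u hu
            rw [hxi u hu _ hα]
            simp only [oneStep]
            exact congr_EG hS (ih (SFlist_trans hα (by simp [SFlist, self_mem_SFlist]))) hu
        | AU β γ ih1 ih2 =>
            intro hα u hu
            rw [hxi u hu _ hα]
            simp only [oneStep]
            exact congr_AU hS (ih1 (SFlist_trans hα (by simp [SFlist, self_mem_SFlist])))
              (ih2 (SFlist_trans hα (by simp [SFlist, self_mem_SFlist]))) hu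
        | EU β γ ih1 ih2 =>
            intro hα u hu
            rw [hxi u hu _ hα]
            simp only [oneStep]
            exact congr_EU hS (ih1 (SFlist_trans hα (by simp [SFlist, self_mem_SFlist])))
              (ih2 (SFlist_trans hα (by simp [SFlist, self_mem_SFlist]))) hu
        | AR β γ ih1 ih2 =>
            intro hα u hu
            rw [hxi u hu _ hα]
            simp only [oneStep]
            exact congr_AR hS (ih1 (SFlist_trans hα (by simp [SFlist, self_mem_SFlist])))
              (ih2 (SFlist_trans hα (by simp [SFlist, self_mem_SFlist]))) hu
        | ER β γ ih1 ih2 =>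
            intro hα u hu
            rw [hxi u hu _ hα]
            simp only [oneStep]
            exact congr_ER hS (ih1 (SFlist_trans hα (by simp [SFlist, self_mem_SFlist])))
              (ih2 (SFlist_trans hα (by simp [SFlist, self_mem_SFlist]))) hu
      exact ⟨V', (main φ (self_mem_SFlist φ) w (reach_self hser w)).mp h1⟩
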